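/- Let G be a simple graph on Fin n, f_G its MaxCut objective, and φ : G ≃g G a graph automorphism. Then f_G (fun i => x (φ i)) = f_G x for every x : X, and consequently, taking C := Matrix.diagonal (fun x => (f_G x : ℂ)), for every depth p : ℕ, all parameters β γ : Fin p → ℝ, and every x : X, the QAOA measurement probabilities satisfy Pr(x) = Pr(fun i => x (φ i)). -/

import Mathlib

/-- Permutation matrix of a permutation `a` of a finite type `X`:
`(P a) x y = 1` if `x = a y` and `0` otherwise. -/
noncomputable def permMatrix {X : Type*} [Fintype X] [DecidableEq X] (a : Equiv.Perm X) :
    Matrix X X ℂ :=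
  Matrix.of fun x y => if x = a y then 1 else 0

/-- The transverse-field mixing Hamiltonian `B = ∑_j X_j` in the computational basis:
`B x y = 1` if the bitstrings `x` and `y` differ in exactly one coordinate, else `0`. -/
noncomputable def mixerB (n : ℕ) : Matrix (Fin n → Bool) (Fin n → Bool) ℂ :=
  Matrix.of fun x y => if (Finset.univ.filter fun i => x i ≠ y i).card = 1 then 1 else 0

/-- The diagonal objective Hamiltonian `C` of an objective function `f`. -/
noncomputable def objC (n : ℕ) (f : (Fin n → Bool) → ℝ) :
    Matrix (Fin n → Bool) (Fin n → Bool) ℂ :=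
  Matrix.diagonal fun x => (f x : ℂ)

/-- The uniform superposition initial state. -/
noncomputable def uniformState (n : ℕ) : (Fin n → Bool) → ℂ :=
  fun _ => ((1 / Real.sqrt (2 ^ n) : ℝ) : ℂ)

/-- The depth-`p` QAOA state with parameters `β γ : Fin p → ℝ`: the layers
`exp (-i γ_j C)` then `exp (-i β_j B)` are applied to the uniform initial state
in order `j = 1, …, p`. -/
noncomputable def qaoaState (n : ℕ) (f : (Fin n → Bool) → ℝ) (p : ℕ) (β γ : Fin p → ℝ) :
    (Fin n → Bool) → ℂ :=
  (((List.finRange p).map fun j =>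
      NormedSpace.exp ((-(β j : ℂ) * Complex.I) • mixerB n) *
        NormedSpace.exp ((-(γ j : ℂ) * Complex.I) • objC n f)).reverse.prod).mulVec
    (uniformState n)

/-- The MaxCut objective of a simple graph `G` on `Fin n`: the number of edges `{u, v}`
of `G` with `x u ≠ x v`. -/
noncomputable def maxCutObj {n : ℕ} (G : SimpleGraph (Fin n)) (x : Fin n → Bool) : ℕ :=
  {e | e ∈ G.edgeSet ∧ ¬ (Sym2.map x e).IsDiag}.ncard

section Aux
variable {X : Type*} [Fintype X] [DecidableEq X]

lemma permMatrix_mulVec (a : Equiv.Perm X) (v : X → ℂ) (x : X) :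
    (permMatrix a).mulVec v x = v (a.symm x) := by
  simp only [permMatrix, Matrix.mulVec, dotProduct, Matrix.of_apply, ite_mul, one_mul,
    zero_mul, ← Equiv.symm_apply_eq]
  rw [Finset.sum_ite_eq]
  simp

lemma permMatrix_commute (a : Equiv.Perm X) (M : Matrix X X ℂ)
    (h : ∀ x y, M (a x) (a y) = M x y) : Commute (permMatrix a) M := by
  ext x y
  simp only [Matrix.mul_apply, permMatrix, Matrix.of_apply, ite_mul, one_mul, zero_mul,
    mul_ite, mul_one, mul_zero]
  rw [Finset.sum_ite_eq' Finset.univ (a y) (fun z => M x z)]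
  simp only [← Equiv.symm_apply_eq a]
  rw [Finset.sum_ite_eq]
  simpa using (h (a.symm x) y).symm

lemma commute_exp {A B : Matrix X X ℂ} (h : Commute A B) :
    Commute A (NormedSpace.exp B) :=
  h.exp_right

end Aux

lemma maxCut_perm {n : ℕ} (G : SimpleGraph (Fin n)) (φ : G ≃g G) (x : Fin n → Bool) :
    maxCutObj G (fun i => x (φ i)) = maxCutObj G x := by
  classical
  have hinj : Function.Injective (Sym2.map ⇑φ) := Sym2.map.injective φ.toEquiv.injective
  have hsurj : Function.Surjective (Sym2.map ⇑φ) := by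
    intro e
    induction e using Sym2.ind with
    | _ u v => exact ⟨s(φ.symm u, φ.symm v), by simp⟩
  have hpre : {e | e ∈ G.edgeSet ∧ ¬ (Sym2.map (fun i => x (φ i)) e).IsDiag}
      = Sym2.map ⇑φ ⁻¹' {e | e ∈ G.edgeSet ∧ ¬ (Sym2.map x e).IsDiag} := by
    ext e
    induction e using Sym2.ind with
    | _ u v => simp [SimpleGraph.mem_edgeSet, φ.map_adj_iff]
  rw [maxCutObj, maxCutObj, hpre]
  conv_rhs => rw [← Set.image_preimage_eq {e | e ∈ G.edgeSet ∧ ¬ (Sym2.map x e).IsDiag} hsurj]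
  rw [Set.ncard_image_of_injective _ hinj]

/-- Corollary 2: a graph automorphism `φ : G ≃g G` leaves the MaxCut objective invariant,
and consequently QAOA measurement probabilities satisfy `Pr x = Pr (fun i => x (φ i))`
for every depth, all parameters, and every bitstring. -/
theorem maxcut_graph_automorphism_symmetry (n : ℕ) (G : SimpleGraph (Fin n)) (φ : G ≃g G) :
    (∀ x : Fin n → Bool, maxCutObj G (fun i => x (φ i)) = maxCutObj G x) ∧
    (∀ (p : ℕ) (β γ : Fin p → ℝ) (x : Fin n → Bool),
      ‖qaoaState n (fun y => (maxCutObj G y : ℝ)) p β γ x‖ ^ 2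
        = ‖qaoaState n (fun y => (maxCutObj G y : ℝ)) p β γ (fun i => x (φ i))‖ ^ 2) := by
  classical
  refine ⟨maxCut_perm G φ, ?_⟩
  intro p β γ x
  set f : (Fin n → Bool) → ℝ := fun y => (maxCutObj G y : ℝ) with hf
  set σ : Equiv.Perm (Fin n → Bool) :=
    { toFun := fun y i => y (φ i)
      invFun := fun y i => y (φ.symm i)
      left_inv := fun y => by funext i; simp
      right_inv := fun y => by funext i; simp } with hσ
  have hB : ∀ a b, mixerB n (σ a) (σ b) = mixerB n a b := by
    intro a b
    have hc : (Finset.univ.filter fun i => σ a i ≠ σ b i).card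
        = (Finset.univ.filter fun i => a i ≠ b i).card := by
      apply Finset.card_equiv φ.toEquiv
      intro i
      simp [hσ]
    simp only [mixerB, Matrix.of_apply, hc]
  have hC : ∀ a b, objC n f (σ a) (σ b) = objC n f a b := by
    intro a b
    simp only [objC, Matrix.diagonal_apply]
    by_cases hab : a = b
    · subst hab
      simp only [if_pos rfl]
      have : f (σ a) = f a := by
        simp only [hf, hσ, Equiv.coe_fn_mk]
        exact_mod_cast congrArg (Nat.cast : ℕ → ℝ) (maxCut_perm G φ a)
      rw [this]
    · rw [if_neg (fun hcon => hab (σ.injective hcon)), if_neg hab]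
  have cB : Commute (permMatrix σ) (mixerB n) := permMatrix_commute σ _ hB
  have cC : Commute (permMatrix σ) (objC n f) := permMatrix_commute σ _ hC
  have hcom : ∀ M ∈ ((List.finRange p).map fun j =>
      NormedSpace.exp ((-(β j : ℂ) * Complex.I) • mixerB n) *
        NormedSpace.exp ((-(γ j : ℂ) * Complex.I) • objC n f)).reverse,
      Commute (permMatrix σ) M := by
    intro M hM
    simp only [List.mem_reverse, List.mem_map, List.mem_finRange, true_and] at hM
    obtain ⟨j, rfl⟩ := hM
    exact (commute_exp (cB.smul_right _)).mul_right (commute_exp (cC.smul_right _))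
  have hProd := Commute.list_prod_right _ _ hcom
  have hPs : (permMatrix σ).mulVec (uniformState n) = uniformState n := by
    funext y
    rw [permMatrix_mulVec]
    rfl
  have key : ∀ y, qaoaState n f p β γ y = qaoaState n f p β γ (σ.symm y) := by
    intro y
    conv_lhs => rw [qaoaState, ← hPs, Matrix.mulVec_mulVec, ← hProd.eq, ← Matrix.mulVec_mulVec,
      permMatrix_mulVec]
    rfl
  have hx : (fun i => x (φ i)) = σ x := rfl
  rw [hx, key (σ x), Equiv.symm_apply_apply]
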